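/- For γ_1, γ_2 ∈ SL(n+1,ℤ), if there exist δ ∈ Δ (a subgroup of SL(n+1,ℤ)), h_1, h_2 ∈ H, and y > 0 with δγ_1h_1 = γ_2h_2a(y), then y = 1 and γ_2^{-1}δγ_1 ∈ Γ_H. Consequently the sets Δγ_1 H_a and Δγ_2 H_a in SL(n+1,ℝ) are either equal or disjoint, and they coincide exactly when Δγ_1 = Δγ_2γ̃ for some γ̃ ∈ Γ_H. -/

import Mathlib

open Matrix

noncomputable section

abbrev SL (m : ℕ) (R : Type) [CommRing R] := Matrix.SpecialLinearGroup (Fin m) R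

def lastVec (n : ℕ) (R : Type) [CommRing R] : Fin (n+1) → R := Pi.single (Fin.last n) 1

def Primitive {n : ℕ} (a : Fin (n+1) → ℤ) : Prop := Finset.univ.gcd a = 1

/-- The stabilizer of the row vector (0,...,0,1) under right multiplication. -/
def stab (n : ℕ) (R : Type) [CommRing R] : Subgroup (SL (n+1) R) where
  carrier := {γ | Matrix.vecMul (lastVec n R) (γ : Matrix (Fin (n+1)) (Fin (n+1)) R) = lastVec n R}
  one_mem' := by simp
  mul_mem' := by
    intro a b ha hb
    simp only [Set.mem_setOf_eq] at *
    rw [Matrix.SpecialLinearGroup.coe_mul, ← Matrix.vecMul_vecMul, ha, hb]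
  inv_mem' := by
    intro a ha
    simp only [Set.mem_setOf_eq] at *
    conv_lhs => rw [← ha]
    rw [Matrix.vecMul_vecMul, ← Matrix.SpecialLinearGroup.coe_mul, mul_inv_cancel,
      Matrix.SpecialLinearGroup.coe_one, Matrix.vecMul_one]

/-- The diagonal matrix a(y) = diag(y^{1/n} I_n, y⁻¹). -/
def aMat (n : ℕ) (y : ℝ) : Matrix (Fin (n+1)) (Fin (n+1)) ℝ :=
  Matrix.diagonal (fun i => if i = Fin.last n then y⁻¹ else y ^ ((n : ℝ)⁻¹))

/-- The unipotent matrix h(x), with bottom-left row −x. -/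
def hMat {n : ℕ} (x : Fin n → ℝ) : Matrix (Fin (n+1)) (Fin (n+1)) ℝ :=
  fun i j => if i = j then 1 else
    if i = Fin.last n then (if hj : j = Fin.last n then 0 else -x (j.castPred hj)) else 0

/-- The unipotent integer matrix u(x). -/
def uMat {n : ℕ} (x : Fin n → ℤ) : Matrix (Fin (n+1)) (Fin (n+1)) ℤ :=
  fun i j => if i = j then 1 else
    if i = Fin.last n then (if hj : j = Fin.last n then 0 else x (j.castPred hj)) else 0

/-- The Euclidean norm on ℝ^n. -/
def enorm {n : ℕ} (v : Fin n → ℝ) : ℝ := Real.sqrt (∑ i, (v i)^2)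

abbrev mapSL (n : ℕ) : SL (n+1) ℤ →* SL (n+1) ℝ :=
  Matrix.SpecialLinearGroup.map (Int.castRingHom ℝ)

instance (m : ℕ) : TopologicalSpace (SL m ℝ) :=
  TopologicalSpace.induced (fun A => (A : Matrix (Fin m) (Fin m) ℝ)) inferInstance

section Aux
variable {n : ℕ}

lemma vecMul_lastVec {R : Type} [CommRing R] (M : Matrix (Fin (n+1)) (Fin (n+1)) R) :
    Matrix.vecMul (lastVec n R) M = M (Fin.last n) := by
  ext j; simp [lastVec, Matrix.vecMul, dotProduct, Pi.single_apply, ite_mul]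

lemma mem_stab_iff {R : Type} [CommRing R] (γ : SL (n+1) R) :
    γ ∈ stab n R ↔ (γ : Matrix (Fin (n+1)) (Fin (n+1)) R) (Fin.last n) = lastVec n R := by
  change Matrix.vecMul _ _ = _ ↔ _
  rw [vecMul_lastVec]

lemma mapSL_coe (γ : SL (n+1) ℤ) (i j : Fin (n+1)) :
    ((mapSL n γ : SL (n+1) ℝ) : Matrix (Fin (n+1)) (Fin (n+1)) ℝ) i j
      = ((γ : Matrix (Fin (n+1)) (Fin (n+1)) ℤ) i j : ℝ) := by
  simp [Matrix.SpecialLinearGroup.map]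
  rfl

lemma mapSL_mem_stab {γ : SL (n+1) ℤ} (hγ : γ ∈ stab n ℤ) : mapSL n γ ∈ stab n ℝ := by
  rw [mem_stab_iff] at hγ ⊢
  funext j
  rw [mapSL_coe, hγ]
  simp [lastVec, Pi.single_apply]

lemma aMat_one : aMat n 1 = 1 := by
  simp [aMat, Matrix.diagonal_one]

lemma aMat_mul {y z : ℝ} (hy : 0 ≤ y) (hz : 0 ≤ z) : aMat n y * aMat n z = aMat n (y*z) := by
  rw [aMat, aMat, aMat, Matrix.diagonal_mul_diagonal]
  refine congrArg Matrix.diagonal (funext fun i => ?_)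
  split_ifs <;> simp [mul_inv, Real.mul_rpow hy hz, mul_comm]

lemma lastVec_vecMul_aMat (y : ℝ) :
    Matrix.vecMul (lastVec n ℝ) (aMat n y) = y⁻¹ • lastVec n ℝ := by
  funext j
  simp only [aMat, Matrix.vecMul_diagonal, lastVec, Pi.smul_apply, smul_eq_mul, Pi.single_apply]
  split_ifs <;> ring

lemma coe_mapSL_inv_mul (γ : SL (n+1) ℤ) :
    ((mapSL n γ⁻¹ : SL (n+1) ℝ) : Matrix (Fin (n+1)) (Fin (n+1)) ℝ)
      * ((mapSL n γ : SL (n+1) ℝ) : Matrix (Fin (n+1)) (Fin (n+1)) ℝ) = 1 := by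
  rw [← Matrix.SpecialLinearGroup.coe_mul, ← _root_.map_mul, inv_mul_cancel, _root_.map_one,
    Matrix.SpecialLinearGroup.coe_one]

lemma mapSL_coe_mul (a b : SL (n+1) ℤ) :
    ((mapSL n (a * b) : SL (n+1) ℝ) : Matrix (Fin (n+1)) (Fin (n+1)) ℝ)
      = ((mapSL n a : SL (n+1) ℝ) : Matrix (Fin (n+1)) (Fin (n+1)) ℝ)
        * ((mapSL n b : SL (n+1) ℝ) : Matrix (Fin (n+1)) (Fin (n+1)) ℝ) := by
  rw [_root_.map_mul, Matrix.SpecialLinearGroup.coe_mul]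

lemma cancel_left (γ : SL (n+1) ℤ) (X : Matrix (Fin (n+1)) (Fin (n+1)) ℝ) :
    ((mapSL n γ⁻¹ : SL (n+1) ℝ) : Matrix (Fin (n+1)) (Fin (n+1)) ℝ)
      * (((mapSL n γ : SL (n+1) ℝ) : Matrix (Fin (n+1)) (Fin (n+1)) ℝ) * X) = X := by
  rw [← mul_assoc, coe_mapSL_inv_mul, one_mul]

/-- The key row computation. -/
lemma row_lemma {B : SL (n+1) ℤ} {h h' : SL (n+1) ℝ} (hh : h ∈ stab n ℝ) (hh' : h' ∈ stab n ℝ)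
    {y : ℝ}
    (E : ((mapSL n B : SL (n+1) ℝ) : Matrix (Fin (n+1)) (Fin (n+1)) ℝ)
          * ((h : SL (n+1) ℝ) : Matrix (Fin (n+1)) (Fin (n+1)) ℝ)
        = ((h' : SL (n+1) ℝ) : Matrix (Fin (n+1)) (Fin (n+1)) ℝ) * aMat n y) :
    ∀ j, ((B : Matrix (Fin (n+1)) (Fin (n+1)) ℤ) (Fin.last n) j : ℝ) = y⁻¹ * lastVec n ℝ j := by
  have hrow := congrArg (fun M => Matrix.vecMul (lastVec n ℝ) M) E
  simp only [← Matrix.vecMul_vecMul] at hrow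
  rw [hh', lastVec_vecMul_aMat, vecMul_lastVec] at hrow
  have h2 : Matrix.vecMul (Matrix.vecMul
        (((mapSL n B : SL (n+1) ℝ) : Matrix (Fin (n+1)) (Fin (n+1)) ℝ) (Fin.last n))
        ((h : SL (n+1) ℝ) : Matrix (Fin (n+1)) (Fin (n+1)) ℝ))
        (((h⁻¹ : SL (n+1) ℝ) : SL (n+1) ℝ) : Matrix (Fin (n+1)) (Fin (n+1)) ℝ)
      = Matrix.vecMul (y⁻¹ • lastVec n ℝ)
        (((h⁻¹ : SL (n+1) ℝ) : SL (n+1) ℝ) : Matrix (Fin (n+1)) (Fin (n+1)) ℝ) := by rw [hrow]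
  have hhinv : ((h : SL (n+1) ℝ) : Matrix (Fin (n+1)) (Fin (n+1)) ℝ)
      * (((h⁻¹ : SL (n+1) ℝ) : SL (n+1) ℝ) : Matrix (Fin (n+1)) (Fin (n+1)) ℝ) = 1 := by
    rw [← Matrix.SpecialLinearGroup.coe_mul, mul_inv_cancel, Matrix.SpecialLinearGroup.coe_one]
  rw [Matrix.vecMul_vecMul, hhinv, Matrix.vecMul_one, Matrix.smul_vecMul,
    show Matrix.vecMul (lastVec n ℝ)
        (((h⁻¹ : SL (n+1) ℝ) : SL (n+1) ℝ) : Matrix (Fin (n+1)) (Fin (n+1)) ℝ) = lastVec n ℝ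
      from (stab n ℝ).inv_mem hh] at h2
  intro j
  have h3 := congrFun h2 j
  rw [mapSL_coe] at h3
  simpa using h3

lemma part1 (hn : 1 ≤ n) (Δ : Subgroup (SL (n+1) ℤ)) :
    ∀ (γ₁ γ₂ : SL (n+1) ℤ) (δ : SL (n+1) ℤ), δ ∈ Δ →
      ∀ h₁ h₂ : SL (n+1) ℝ, h₁ ∈ stab n ℝ → h₂ ∈ stab n ℝ →
      ∀ y : ℝ, 0 < y →
      ((mapSL n (δ * γ₁) : SL (n+1) ℝ) : Matrix (Fin (n+1)) (Fin (n+1)) ℝ)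
          * ((h₁ : SL (n+1) ℝ) : Matrix (Fin (n+1)) (Fin (n+1)) ℝ)
        = ((mapSL n γ₂ : SL (n+1) ℝ) : Matrix (Fin (n+1)) (Fin (n+1)) ℝ)
          * ((h₂ : SL (n+1) ℝ) : Matrix (Fin (n+1)) (Fin (n+1)) ℝ) * aMat n y →
      y = 1 ∧ γ₂⁻¹ * δ * γ₁ ∈ stab n ℤ := by
  intro γ₁ γ₂ δ hδ h₁ h₂ hh₁ hh₂ y hy heq
  set B : SL (n+1) ℤ := γ₂⁻¹ * δ * γ₁ with hB
  have keyB : ((mapSL n B : SL (n+1) ℝ) : Matrix (Fin (n+1)) (Fin (n+1)) ℝ)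
          * ((h₁ : SL (n+1) ℝ) : Matrix (Fin (n+1)) (Fin (n+1)) ℝ)
        = ((h₂ : SL (n+1) ℝ) : Matrix (Fin (n+1)) (Fin (n+1)) ℝ) * aMat n y := by
    simp only [hB, mapSL_coe_mul, mul_assoc]
    simp only [mapSL_coe_mul, mul_assoc] at heq
    rw [heq]
    exact cancel_left γ₂ _
  have keyBinv : ((mapSL n B⁻¹ : SL (n+1) ℝ) : Matrix (Fin (n+1)) (Fin (n+1)) ℝ)
          * ((h₂ : SL (n+1) ℝ) : Matrix (Fin (n+1)) (Fin (n+1)) ℝ)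
        = ((h₁ : SL (n+1) ℝ) : Matrix (Fin (n+1)) (Fin (n+1)) ℝ) * aMat n y⁻¹ := by
    have h1 : ((mapSL n B⁻¹ : SL (n+1) ℝ) : Matrix (Fin (n+1)) (Fin (n+1)) ℝ)
        * (((h₂ : SL (n+1) ℝ) : Matrix (Fin (n+1)) (Fin (n+1)) ℝ) * aMat n y)
        = ((h₁ : SL (n+1) ℝ) : Matrix (Fin (n+1)) (Fin (n+1)) ℝ) := by
      rw [← keyB, ← mul_assoc, coe_mapSL_inv_mul, one_mul]
    have h2 := congrArg (fun M => M * aMat n y⁻¹) h1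
    simp only [mul_assoc] at h2 ⊢
    rwa [aMat_mul hy.le (inv_nonneg.mpr hy.le), mul_inv_cancel₀ hy.ne', aMat_one, mul_one] at h2
  have r1 := row_lemma hh₁ hh₂ keyB
  have r2 := row_lemma hh₂ hh₁ keyBinv
  have e1 : ((B : Matrix (Fin (n+1)) (Fin (n+1)) ℤ) (Fin.last n) (Fin.last n) : ℝ) = y⁻¹ := by
    simpa [lastVec, Pi.single_apply] using r1 (Fin.last n)
  have e2 : (((B⁻¹ : SL (n+1) ℤ) : Matrix (Fin (n+1)) (Fin (n+1)) ℤ) (Fin.last n) (Fin.last n) : ℝ)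
      = y := by
    simpa [lastVec, Pi.single_apply] using r2 (Fin.last n)
  set k : ℤ := (B : Matrix (Fin (n+1)) (Fin (n+1)) ℤ) (Fin.last n) (Fin.last n)
  set m : ℤ := ((B⁻¹ : SL (n+1) ℤ) : Matrix (Fin (n+1)) (Fin (n+1)) ℤ) (Fin.last n) (Fin.last n)
  have hmk : m * k = 1 := by
    have : ((m * k : ℤ) : ℝ) = ((1 : ℤ) : ℝ) := by
      push_cast
      rw [e1, e2, mul_inv_cancel₀ hy.ne']
    exact_mod_cast this
  have hmpos : 0 < m := by
    have : (0:ℝ) < (m:ℝ) := by rw [e2]; exact hy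
    exact_mod_cast this
  have hm1 : m = 1 := by
    rcases Int.isUnit_iff.mp (IsUnit.of_mul_eq_one (a := m) k hmk) with h | h
    · exact h
    · omega
  have hy1 : y = 1 := by
    rw [← e2, hm1]; norm_num
  refine ⟨hy1, ?_⟩
  rw [mem_stab_iff]
  funext j
  have hj := r1 j
  rw [hy1, inv_one, one_mul] at hj
  have hcast : ((B : Matrix (Fin (n+1)) (Fin (n+1)) ℤ) (Fin.last n) j : ℝ)
      = ((lastVec n ℤ j : ℤ) : ℝ) := by
    rw [hj]; simp only [lastVec, Pi.single_apply]; split_ifs <;> simp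
  exact_mod_cast hcast

end Aux

lemma S_subset {n : ℕ} (Δ : Subgroup (SL (n+1) ℤ)) {γ₁ γ₂ δ₀ γt : SL (n+1) ℤ}
    (hδ₀ : δ₀ ∈ Δ) (hγt : γt ∈ stab n ℤ) (hγ : γ₁ = δ₀ * γ₂ * γt) :
    {A | ∃ δ ∈ Δ, ∃ h ∈ stab n ℝ, ∃ y : ℝ, 1 ≤ y ∧
        A = ((mapSL n (δ * γ₁) : SL (n+1) ℝ) : Matrix (Fin (n+1)) (Fin (n+1)) ℝ)
              * ((h : SL (n+1) ℝ) : Matrix (Fin (n+1)) (Fin (n+1)) ℝ) * aMat n y}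
      ⊆ {A | ∃ δ ∈ Δ, ∃ h ∈ stab n ℝ, ∃ y : ℝ, 1 ≤ y ∧
        A = ((mapSL n (δ * γ₂) : SL (n+1) ℝ) : Matrix (Fin (n+1)) (Fin (n+1)) ℝ)
              * ((h : SL (n+1) ℝ) : Matrix (Fin (n+1)) (Fin (n+1)) ℝ) * aMat n y} := by
  rintro A ⟨δ, hδ, h, hh, y, hy, rfl⟩
  refine ⟨δ * δ₀, Δ.mul_mem hδ hδ₀, mapSL n γt * h,
    (stab n ℝ).mul_mem (mapSL_mem_stab hγt) hh, y, hy, ?_⟩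
  rw [hγ, show δ * (δ₀ * γ₂ * γt) = (δ * δ₀ * γ₂) * γt by group, _root_.map_mul,
    Matrix.SpecialLinearGroup.coe_mul, Matrix.SpecialLinearGroup.coe_mul]
  simp only [mul_assoc]

/-- If δγ₁h₁ = γ₂h₂a(y) with δ ∈ Δ, h₁,h₂ ∈ H, y > 0, then y = 1 and γ₂⁻¹δγ₁ ∈ Γ_H.
Consequently the sets Δγ₁H_a and Δγ₂H_a are equal or disjoint, and they coincide
exactly when Δγ₁ = Δγ₂γ̃ for some γ̃ ∈ Γ_H. -/
theorem stmt8 (n : ℕ) (hn : 1 ≤ n) (Δ : Subgroup (SL (n+1) ℤ)) :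
    let S : SL (n+1) ℤ → Set (Matrix (Fin (n+1)) (Fin (n+1)) ℝ) := fun γ =>
      {A | ∃ δ ∈ Δ, ∃ h ∈ stab n ℝ, ∃ y : ℝ, 1 ≤ y ∧
        A = ((mapSL n (δ * γ) : SL (n+1) ℝ) : Matrix (Fin (n+1)) (Fin (n+1)) ℝ)
              * ((h : SL (n+1) ℝ) : Matrix (Fin (n+1)) (Fin (n+1)) ℝ) * aMat n y}
    (∀ (γ₁ γ₂ : SL (n+1) ℤ) (δ : SL (n+1) ℤ), δ ∈ Δ →
      ∀ h₁ h₂ : SL (n+1) ℝ, h₁ ∈ stab n ℝ → h₂ ∈ stab n ℝ →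
      ∀ y : ℝ, 0 < y →
      ((mapSL n (δ * γ₁) : SL (n+1) ℝ) : Matrix (Fin (n+1)) (Fin (n+1)) ℝ)
          * ((h₁ : SL (n+1) ℝ) : Matrix (Fin (n+1)) (Fin (n+1)) ℝ)
        = ((mapSL n γ₂ : SL (n+1) ℝ) : Matrix (Fin (n+1)) (Fin (n+1)) ℝ)
          * ((h₂ : SL (n+1) ℝ) : Matrix (Fin (n+1)) (Fin (n+1)) ℝ) * aMat n y →
      y = 1 ∧ γ₂⁻¹ * δ * γ₁ ∈ stab n ℤ)
    ∧ (∀ γ₁ γ₂ : SL (n+1) ℤ,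
        (S γ₁ = S γ₂ ∨ Disjoint (S γ₁) (S γ₂))
        ∧ (S γ₁ = S γ₂ ↔ ∃ γt ∈ stab n ℤ, ∃ δ ∈ Δ, γ₁ = δ * γ₂ * γt)) := by
  intro S
  have P1 := part1 hn Δ
  refine ⟨P1, ?_⟩
  intro γ₁ γ₂
  have key : ¬ Disjoint (S γ₁) (S γ₂) → ∃ γt ∈ stab n ℤ, ∃ δ ∈ Δ, γ₁ = δ * γ₂ * γt := by
    intro hd
    obtain ⟨A, hA₁, hA₂⟩ := Set.not_disjoint_iff.mp hd
    obtain ⟨δ₁, hδ₁, h₁, hh₁, y₁, hy₁, hAeq₁⟩ := hA₁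
    obtain ⟨δ₂, hδ₂, h₂, hh₂, y₂, hy₂, hAeq₂⟩ := hA₂
    have hy₁0 : (0:ℝ) < y₁ := lt_of_lt_of_le one_pos hy₁
    have hy₂0 : (0:ℝ) < y₂ := lt_of_lt_of_le one_pos hy₂
    have eq0 := hAeq₁.symm.trans hAeq₂
    have eq1 : ((mapSL n (δ₁ * γ₁) : SL (n+1) ℝ) : Matrix (Fin (n+1)) (Fin (n+1)) ℝ)
          * ((h₁ : SL (n+1) ℝ) : Matrix (Fin (n+1)) (Fin (n+1)) ℝ)
        = ((mapSL n (δ₂ * γ₂) : SL (n+1) ℝ) : Matrix (Fin (n+1)) (Fin (n+1)) ℝ)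
          * ((h₂ : SL (n+1) ℝ) : Matrix (Fin (n+1)) (Fin (n+1)) ℝ) * aMat n (y₂ * y₁⁻¹) := by
      have := congrArg (fun M => M * aMat n y₁⁻¹) eq0
      simp only [mul_assoc] at this ⊢
      rwa [aMat_mul hy₁0.le (inv_nonneg.mpr hy₁0.le), mul_inv_cancel₀ hy₁0.ne', aMat_one,
        mul_one, aMat_mul hy₂0.le (inv_nonneg.mpr hy₁0.le)] at this
    have eq2 : ((mapSL n ((δ₂⁻¹ * δ₁) * γ₁) : SL (n+1) ℝ) : Matrix (Fin (n+1)) (Fin (n+1)) ℝ)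
          * ((h₁ : SL (n+1) ℝ) : Matrix (Fin (n+1)) (Fin (n+1)) ℝ)
        = ((mapSL n γ₂ : SL (n+1) ℝ) : Matrix (Fin (n+1)) (Fin (n+1)) ℝ)
          * ((h₂ : SL (n+1) ℝ) : Matrix (Fin (n+1)) (Fin (n+1)) ℝ) * aMat n (y₂ * y₁⁻¹) := by
      simp only [mapSL_coe_mul, mul_assoc] at eq1 ⊢
      rw [eq1]
      exact cancel_left δ₂ _
    obtain ⟨-, hmem⟩ := P1 γ₁ γ₂ (δ₂⁻¹ * δ₁) (Δ.mul_mem (Δ.inv_mem hδ₂) hδ₁) h₁ h₂ hh₁ hh₂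
      (y₂ * y₁⁻¹) (mul_pos hy₂0 (inv_pos.mpr hy₁0)) eq2
    exact ⟨γ₂⁻¹ * (δ₂⁻¹ * δ₁) * γ₁, hmem, δ₁⁻¹ * δ₂,
      Δ.mul_mem (Δ.inv_mem hδ₁) hδ₂, by group⟩
  have hiff : S γ₁ = S γ₂ ↔ ∃ γt ∈ stab n ℤ, ∃ δ ∈ Δ, γ₁ = δ * γ₂ * γt := by
    constructor
    · intro hEq
      apply key
      rw [hEq, Set.disjoint_iff_inter_eq_empty, Set.inter_self]
      intro hemp
      have hne : ((mapSL n ((1:SL (n+1) ℤ) * γ₂) : SL (n+1) ℝ) : Matrix (Fin (n+1)) (Fin (n+1)) ℝ)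
          * (((1 : SL (n+1) ℝ) : SL (n+1) ℝ) : Matrix (Fin (n+1)) (Fin (n+1)) ℝ) * aMat n 1 ∈ S γ₂ :=
        ⟨1, Δ.one_mem, 1, (stab n ℝ).one_mem, 1, le_refl 1, rfl⟩
      rw [hemp] at hne
      exact hne
    · rintro ⟨γt, hγt, δ₀, hδ₀, hγ⟩
      have hγ' : γ₂ = δ₀⁻¹ * γ₁ * γt⁻¹ := by rw [hγ]; group
      exact Set.Subset.antisymm (S_subset Δ hδ₀ hγt hγ)
        (S_subset Δ (Δ.inv_mem hδ₀) ((stab n ℤ).inv_mem hγt) hγ')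
  refine ⟨?_, hiff⟩
  by_cases hd : Disjoint (S γ₁) (S γ₂)
  · exact Or.inr hd
  · exact Or.inl (hiff.mpr (key hd))
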